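/- Let r ∈ (0,1) and let f(x) = e^{−x}·1_{(0,∞)}(x) be the standard exponential density on ℝ. Then N_r(f) = (1/r)^{2/(1−r)}, (f⋆f)(x) = x e^{−x}·1_{(0,∞)}(x), and N_r(f⋆f) = (Γ(r+1)/r^{r+1})^{2/(1−r)}. Consequently, any α > 0 satisfying N_r(f⋆f)^α ≥ 2·N_r(f)^α must satisfy α ≥ (1−r)·log 2 / (2·log Γ(r+1) + 2r·log(1/r)). -/

import Mathlib

open MeasureTheory Real

/-- The Rényi entropy power of order `r` of a density `f` on `ℝ` (the case `n = 1`). -/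
noncomputable def renyiNP1 (r : ℝ) (f : ℝ → ℝ) : ℝ :=
  (∫ x, f x ^ r) ^ (2 / (1 - r))

/-- Convolution of two functions on `ℝ`. -/
noncomputable def conv1 (f g : ℝ → ℝ) : ℝ → ℝ :=
  fun x => ∫ y, f (x - y) * g y

theorem exponential_renyi_computation (r : ℝ) (hr : r ∈ Set.Ioo (0 : ℝ) 1)
    (f : ℝ → ℝ)
    (hf : f = Set.indicator (Set.Ioi (0 : ℝ)) fun x => Real.exp (-x)) :
    renyiNP1 r f = (1 / r) ^ (2 / (1 - r)) ∧
    conv1 f f = Set.indicator (Set.Ioi (0 : ℝ)) (fun x => x * Real.exp (-x)) ∧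
    renyiNP1 r (conv1 f f) = (Real.Gamma (r + 1) / r ^ (r + 1)) ^ (2 / (1 - r)) ∧
    ∀ α : ℝ, 0 < α →
      renyiNP1 r (conv1 f f) ^ α ≥ 2 * renyiNP1 r f ^ α →
      α ≥ (1 - r) * Real.log 2 /
        (2 * Real.log (Real.Gamma (r + 1)) + 2 * r * Real.log (1 / r)) := by
  obtain ⟨hr0, hr1⟩ := hr
  -- Part 1
  have hint1 : (∫ x, f x ^ r) = 1 / r := by
    have h1 : (fun x => f x ^ r)
        = Set.indicator (Set.Ioi (0:ℝ)) (fun x => Real.exp (-x) ^ r) := by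
      funext x
      by_cases hx : x ∈ Set.Ioi (0:ℝ)
      · simp [hf, Set.indicator_of_mem hx]
      · simp [hf, Set.indicator_of_notMem hx, Real.zero_rpow hr0.ne']
    rw [show (∫ x, f x ^ r) = ∫ x, Set.indicator (Set.Ioi (0:ℝ))
          (fun x => Real.exp (-x) ^ r) x from by rw [← h1],
        integral_indicator measurableSet_Ioi]
    have h2 : ∫ x in Set.Ioi (0:ℝ), Real.exp (-x) ^ r
        = ∫ t in Set.Ioi (0:ℝ), t ^ ((1:ℝ) - 1) * Real.exp (-(r * t)) := by
      refine setIntegral_congr_fun measurableSet_Ioi (fun t ht => ?_)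
      rw [show ((1:ℝ) - 1) = 0 by norm_num, Real.rpow_zero, one_mul, ← Real.exp_mul]
      ring_nf
    rw [h2, Real.integral_rpow_mul_exp_neg_mul_Ioi one_pos hr0, Real.rpow_one,
      Real.Gamma_one, mul_one]
  have hNf : renyiNP1 r f = (1 / r) ^ (2 / (1 - r)) := by
    rw [renyiNP1, hint1]
  -- Part 2
  have hconv : conv1 f f = Set.indicator (Set.Ioi (0 : ℝ)) (fun x => x * Real.exp (-x)) := by
    funext x
    have h1 : (fun y => f (x - y) * f y)
        = Set.indicator (Set.Ioo (0:ℝ) x) (fun _ => Real.exp (-x)) := by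
      funext y
      by_cases hy : y ∈ Set.Ioo (0:ℝ) x
      · have h1 : x - y ∈ Set.Ioi (0:ℝ) := by
          simp only [Set.mem_Ioi]; linarith [hy.2]
        have h2 : y ∈ Set.Ioi (0:ℝ) := Set.mem_Ioi.2 hy.1
        rw [hf, Set.indicator_of_mem h1, Set.indicator_of_mem h2,
          Set.indicator_of_mem hy, ← Real.exp_add]
        ring_nf
      · rw [Set.indicator_of_notMem hy]
        simp only [Set.mem_Ioo, not_and_or, not_lt] at hy
        rcases hy with h | h
        · have : ¬ (y ∈ Set.Ioi (0:ℝ)) := by simp only [Set.mem_Ioi, not_lt]; exact h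
          rw [hf, Set.indicator_of_notMem this, mul_zero]
        · have : ¬ (x - y ∈ Set.Ioi (0:ℝ)) := by
            simp only [Set.mem_Ioi, not_lt]; linarith
          rw [hf, Set.indicator_of_notMem this, zero_mul]
    rw [conv1, h1, integral_indicator measurableSet_Ioo, setIntegral_const,
      measureReal_def, Real.volume_Ioo, smul_eq_mul]
    by_cases hx : x ∈ Set.Ioi (0:ℝ)
    · rw [Set.indicator_of_mem hx,
        ENNReal.toReal_ofReal (by simpa using (Set.mem_Ioi.1 hx).le)]
      ring_nf
    · rw [Set.indicator_of_notMem hx]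
      have hx0 : x ≤ 0 := not_lt.1 (by simpa using hx)
      rw [ENNReal.ofReal_eq_zero.2 (by linarith), ENNReal.toReal_zero, zero_mul]
  -- Part 3
  have hGpos : 0 < Real.Gamma (r + 1) := Real.Gamma_pos_of_pos (by linarith)
  have hint2 : (∫ x, (conv1 f f) x ^ r) = Real.Gamma (r + 1) / r ^ (r + 1) := by
    have h1 : (fun x => (conv1 f f) x ^ r)
        = Set.indicator (Set.Ioi (0:ℝ)) (fun x => (x * Real.exp (-x)) ^ r) := by
      funext x
      by_cases hx : x ∈ Set.Ioi (0:ℝ)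
      · simp [hconv, Set.indicator_of_mem hx]
      · simp [hconv, Set.indicator_of_notMem hx, Real.zero_rpow hr0.ne']
    rw [show (∫ x, (conv1 f f) x ^ r) = ∫ x, Set.indicator (Set.Ioi (0:ℝ))
          (fun x => (x * Real.exp (-x)) ^ r) x from by rw [← h1],
        integral_indicator measurableSet_Ioi]
    have h2 : ∫ x in Set.Ioi (0:ℝ), (x * Real.exp (-x)) ^ r
        = ∫ t in Set.Ioi (0:ℝ), t ^ ((r + 1 : ℝ) - 1) * Real.exp (-(r * t)) := by
      refine setIntegral_congr_fun measurableSet_Ioi (fun t ht => ?_)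
      rw [Real.mul_rpow (le_of_lt (Set.mem_Ioi.1 ht)) (Real.exp_pos _).le,
        show ((r:ℝ) + 1 - 1) = r by ring, ← Real.exp_mul]
      ring_nf
    rw [h2, Real.integral_rpow_mul_exp_neg_mul_Ioi (by linarith) hr0,
      one_div, Real.inv_rpow hr0.le, div_eq_mul_inv, mul_comm]
  have hNc : renyiNP1 r (conv1 f f) = (Real.Gamma (r + 1) / r ^ (r + 1)) ^ (2 / (1 - r)) := by
    rw [renyiNP1, hint2]
  refine ⟨hNf, hconv, hNc, ?_⟩
  -- Part 4
  intro α hα hineq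
  rw [hNf, hNc] at hineq
  have hbase1 : (0:ℝ) < 1 / r := by positivity
  have hbase2 : (0:ℝ) < Real.Gamma (r + 1) / r ^ (r + 1) := by positivity
  have hN1 : (0:ℝ) < (1 / r) ^ (2 / (1 - r)) := Real.rpow_pos_of_pos hbase1 _
  have hN2 : (0:ℝ) < (Real.Gamma (r + 1) / r ^ (r + 1)) ^ (2 / (1 - r)) :=
    Real.rpow_pos_of_pos hbase2 _
  have hlog : α * Real.log ((Real.Gamma (r + 1) / r ^ (r + 1)) ^ (2 / (1 - r)))
      ≥ Real.log 2 + α * Real.log ((1 / r) ^ (2 / (1 - r))) := by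
    have h := Real.log_le_log (by positivity) hineq
    rw [Real.log_rpow hN2, Real.log_mul (by norm_num) (by positivity),
      Real.log_rpow hN1] at h
    linarith
  rw [Real.log_rpow hbase2, Real.log_rpow hbase1,
    Real.log_div hGpos.ne' (by positivity),
    Real.log_rpow hr0] at hlog
  set D : ℝ := 2 * Real.log (Real.Gamma (r + 1)) + 2 * r * Real.log (1 / r) with hD
  have hlogr : Real.log (1 / r) = - Real.log r := by rw [one_div, Real.log_inv]
  have key : α * (D / (1 - r)) ≥ Real.log 2 := by
    have : 2 / (1 - r) * (Real.log (Real.Gamma (r + 1)) - (r + 1) * Real.log r)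
        - 2 / (1 - r) * Real.log (1 / r) = D / (1 - r) := by
      rw [hD, hlogr]; field_simp; ring
    nlinarith [hlog]
  have hlog2 : (0:ℝ) < Real.log 2 := Real.log_pos (by norm_num)
  have h1r : (0:ℝ) < 1 - r := by linarith
  have hDpos : 0 < D := by
    by_contra h
    push_neg at h
    have : α * (D / (1 - r)) ≤ 0 := by
      apply mul_nonpos_of_nonneg_of_nonpos hα.le
      exact div_nonpos_of_nonpos_of_nonneg h h1r.le
    linarith
  rw [ge_iff_le, div_le_iff₀ hDpos]
  have heq : α * (D / (1 - r)) * (1 - r) = α * D := by field_simp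
  have := mul_le_mul_of_nonneg_right key h1r.le
  rw [heq] at this
  nlinarith [this]
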